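/- Let n ≥ 1, k ≥ 0, 1 ≤ ℓ ≤ n and 0 ≤ δ ≤ n−ℓ, and let P be a k-Rvalid vector of size n with exactly ℓ nonempty entries. Then the number of elements of succ(P) having exactly ℓ+δ nonempty entries equals δ!·C(n−ℓ, δ)·Σ_{α=δ}^{ℓ} C(ℓ, α)·ℓ^(ℓ−α)·S(α, δ), where S(a,b) denotes the Stirling number of the second kind. -/

import Mathlib

open Finset

/-- `Π·h`: the vector whose `q`-th entry is the union of the `Π p` over all `p` with `h p = q`. -/
def dotAct {n : ℕ} (Pi : Fin n → Finset ℕ) (h : Fin n → Fin n) : Fin n → Finset ℕ :=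
  fun q => (Finset.univ.filter (fun p => h p = q)).biUnion Pi

/-- Entrywise union of two vectors of sets. -/
def vUnion {n : ℕ} (Pi Pi' : Fin n → Finset ℕ) : Fin n → Finset ℕ :=
  fun q => Pi q ∪ Pi' q

/-- `r = max (π₀ ∪ … ∪ π_{n−1})`. -/
def vMax {n : ℕ} (Pi : Fin n → Finset ℕ) : ℕ :=
  (Finset.univ.sup Pi).sup id

/-- `Π↑`: add `r = max (π₀ ∪ … ∪ π_{n−1})` to every element of every entry. -/
def vUp {n : ℕ} (Pi : Fin n → Finset ℕ) : Fin n → Finset ℕ :=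
  fun q => (Pi q).image (· + vMax Pi)

/-- A `k`-EXPcomposition of size `n`: pairwise disjoint entries whose union is `{1,…,2^k}`. -/
def IsEXP {n : ℕ} (k : ℕ) (Pi : Fin n → Finset ℕ) : Prop :=
  (∀ p q : Fin n, p ≠ q → Disjoint (Pi p) (Pi q)) ∧
    Finset.univ.sup Pi = Finset.Icc 1 (2 ^ k)

/-- A `k`-Rvalid vector of size `n`. -/
def IsRvalid {n : ℕ} (k : ℕ) (ρ : Fin n → Finset ℕ) : Prop :=
  IsEXP k ρ ∧ (∀ p : Fin n, p.val = 0 → 1 ∈ ρ p) ∧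
    ∀ k' < k, ∀ i ∈ Finset.Icc 1 (2 ^ k'), ∀ j ∈ Finset.Icc 1 (2 ^ k'),
      (∃ α, i ∈ ρ α ∧ j ∈ ρ α) → ∃ β, i + 2 ^ k' ∈ ρ β ∧ j + 2 ^ k' ∈ ρ β

/-- A `k`-Lvalid vector of size `m`. -/
def IsLvalid {m : ℕ} (k : ℕ) (lam : Fin m → Finset ℕ) : Prop :=
  IsEXP k lam ∧ (∀ p : Fin m, p.val = 0 → 2 ^ k ∈ lam p) ∧
    ∀ k' < k, ∀ i ∈ Finset.Icc 1 (2 ^ k'), ∀ j ∈ Finset.Icc 1 (2 ^ k'),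
      (∃ α, 2 ^ k + 1 - i ∈ lam α ∧ 2 ^ k + 1 - j ∈ lam α) →
        ∃ β, 2 ^ k + 1 - (i + 2 ^ k') ∈ lam β ∧ 2 ^ k + 1 - (j + 2 ^ k') ∈ lam β

/-- Number of nonempty entries of a vector of sets. -/
def nne {n : ℕ} (Pi : Fin n → Finset ℕ) : ℕ :=
  (Finset.univ.filter (fun q => Pi q ≠ ∅)).card

/-- `succ(P) = {P ∪ (P·g)↑ : g}`. -/
def succSet {n : ℕ} (P : Fin n → Finset ℕ) : Finset (Fin n → Finset ℕ) :=
  (Finset.univ : Finset (Fin n → Fin n)).image (fun g => vUnion P (vUp (dotAct P g)))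

/-- The graded set `U_{m,n}^{(k)}` of U-pairs. -/
def Uset (m n : ℕ) : ℕ → Set ((Fin m → Finset ℕ) × (Fin n → Finset ℕ))
  | 0 => {x | x = (fun p => if p.val = 0 then {1} else ∅,
                   fun q => if q.val = 0 then {1} else ∅)}
  | k + 1 => {x | ∃ L P, (L, P) ∈ Uset m n k ∧ ∃ (f : Fin m → Fin m) (g : Fin n → Fin n),
      x = (vUnion (dotAct L f) (vUp L), vUnion P (vUp (dotAct P g)))}

/-- The `r`-Stirling number: partitions of `{1,…,a}` into `b` nonempty blocks
with `1,…,r` in pairwise distinct blocks. -/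
noncomputable def rStirling (a b r : ℕ) : ℕ :=
  Set.ncard {C : Finset (Finset ℕ) |
    C.card = b ∧ (∅ ∉ C) ∧
    (∀ B ∈ C, ∀ B' ∈ C, B ≠ B' → Disjoint B B') ∧
    C.sup id = Finset.Icc 1 a ∧
    ∀ x ∈ Finset.Icc 1 r, ∀ y ∈ Finset.Icc 1 r, x ≠ y →
      ∀ B ∈ C, x ∈ B → y ∉ B}

/-- The Stirling number of the second kind: the number of partitions of an
`a`-element set into `b` nonempty blocks. -/
noncomputable def stirling2 (a b : ℕ) : ℕ := rStirling a b 0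

/-- The entry `s_n^{(i,j)}` (with `1 ≤ i,j ≤ n`). -/
noncomputable def sEntry (n i j : ℕ) : ℕ :=
  if i ≤ j then
    (j - i).factorial * Nat.choose (n - i) (j - i) *
      ∑ α ∈ Finset.Icc (j - i) i, Nat.choose i α * i ^ (i - α) * stirling2 α (j - i)
  else 0

/-- The matrix `S_n`, with rows and columns indexed by `{1,…,n}`. -/
noncomputable def Smat (n : ℕ) : Matrix (Fin n) (Fin n) ℕ :=
  fun i j => sEntry n (i.val + 1) (j.val + 1)

/-- One step of the shuffle-automaton action on subsets of the grid. -/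
def stepE {m n : ℕ} (E : Finset (Fin m × Fin n)) (f : Fin m → Fin m) (g : Fin n → Fin n) :
    Finset (Fin m × Fin n) :=
  E.image (fun p => (f p.1, p.2)) ∪ E.image (fun p => (p.1, g p.2))

/-- Reachability from `{(0,0)}` by finitely many steps. -/
def Reach {m n : ℕ} (hm : 0 < m) (hn : 0 < n) (E : Finset (Fin m × Fin n)) : Prop :=
  Relation.ReflTransGen (fun E1 E2 => ∃ f g, E2 = stepE E1 f g)
    {(⟨0, hm⟩, ⟨0, hn⟩)} E

/-- Reachability from `{(0,0)}` in at most `t` steps. -/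
def ReachIn {m n : ℕ} (hm : 0 < m) (hn : 0 < n) :
    ℕ → Finset (Fin m × Fin n) → Prop
  | 0, E => E = {(⟨0, hm⟩, ⟨0, hn⟩)}
  | t + 1, E => ReachIn hm hn t E ∨
      ∃ E' f g, ReachIn hm hn t E' ∧ E = stepE E' f g

/-- `s(Λ,P) = {(i,j) : λ_i ∩ ρ_j ≠ ∅}`. -/
def sTab {m n : ℕ} (L : Fin m → Finset ℕ) (P : Fin n → Finset ℕ) :
    Finset (Fin m × Fin n) :=
  Finset.univ.filter (fun p => (L p.1 ∩ P p.2).Nonempty)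



section StmtSevenAux

def surjCount (a b : ℕ) : ℕ := Fintype.card {f : Fin a → Fin b // Function.Surjective f}

def uPart (a b : ℕ) : Finset (Finset (Finset ℕ)) :=
  ((Finset.Icc 1 a).powerset.powerset).filter (fun C => C.card = b ∧ ∅ ∉ C ∧
    (∀ B ∈ C, ∀ B' ∈ C, B ≠ B' → Disjoint B B') ∧ C.sup id = Finset.Icc 1 a)

lemma stirling2_eq_uPart (a b : ℕ) : stirling2 a b = (uPart a b).card := by
  rw [stirling2, rStirling, ← Set.ncard_coe_finset]
  congr 1
  ext C
  simp only [uPart, Finset.coe_filter, Set.mem_setOf_eq, Finset.mem_powerset]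
  constructor
  · rintro ⟨h1, h2, h3, h4, -⟩
    refine ⟨fun B hB => ?_, h1, h2, h3, h4⟩
    simp only [Finset.mem_powerset]
    rw [← h4]; exact Finset.le_sup (f := id) hB
  · rintro ⟨-, h1, h2, h3, h4⟩
    exact ⟨h1, h2, h3, h4, by simp⟩

def oPart (a b : ℕ) : Finset (Fin b → Finset ℕ) :=
  (Fintype.piFinset (fun _ : Fin b => (Finset.Icc 1 a).powerset)).filter
    (fun v => (∀ j, v j ≠ ∅) ∧ (∀ j j' : Fin b, j ≠ j' → Disjoint (v j) (v j')) ∧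
      Finset.univ.sup v = Finset.Icc 1 a)

lemma mem_oPart {a b : ℕ} {v : Fin b → Finset ℕ} :
    v ∈ oPart a b ↔ (∀ j, v j ≠ ∅) ∧ (∀ j j' : Fin b, j ≠ j' → Disjoint (v j) (v j')) ∧
      Finset.univ.sup v = Finset.Icc 1 a := by
  simp only [oPart, Finset.mem_filter, Fintype.mem_piFinset, Finset.mem_powerset,
    and_iff_right_iff_imp]
  rintro ⟨-, -, h3⟩ j
  rw [← h3]; exact Finset.le_sup (f := v) (mem_univ j)

lemma oPart_inj {a b : ℕ} {v : Fin b → Finset ℕ} (hv : v ∈ oPart a b) :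
    Function.Injective v := by
  rw [mem_oPart] at hv
  intro j j' h
  by_contra hne
  have := hv.2.1 j j' hne
  rw [h] at this
  rw [disjoint_self] at this; exact hv.1 j' this

lemma mem_uPart {a b : ℕ} {C : Finset (Finset ℕ)} :
    C ∈ uPart a b ↔ C.card = b ∧ ∅ ∉ C ∧
      (∀ B ∈ C, ∀ B' ∈ C, B ≠ B' → Disjoint B B') ∧ C.sup id = Finset.Icc 1 a := by
  simp only [uPart, Finset.mem_filter, Finset.mem_powerset, and_iff_right_iff_imp]
  rintro ⟨-, -, -, h4⟩ B hB
  simp only [Finset.mem_powerset]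
  rw [← h4]; exact Finset.le_sup (f := id) hB

lemma key_mem_uPart {a b : ℕ} {v : Fin b → Finset ℕ} (hv : v ∈ oPart a b) :
    Finset.univ.image v ∈ uPart a b := by
  obtain ⟨h1, h2, h3⟩ := mem_oPart.mp hv
  rw [mem_uPart]
  refine ⟨?_, ?_, ?_, ?_⟩
  · rw [Finset.card_image_of_injective _ (oPart_inj hv), Finset.card_univ, Fintype.card_fin]
  · intro h
    obtain ⟨j, -, hj⟩ := Finset.mem_image.mp h
    exact h1 j hj
  · intro B hB B' hB' hne
    obtain ⟨j, -, rfl⟩ := Finset.mem_image.mp hB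
    obtain ⟨j', -, rfl⟩ := Finset.mem_image.mp hB'
    exact h2 j j' (fun h => hne (by rw [h]))
  · rw [Finset.sup_image]
    simpa using h3

lemma fiber_card {a b : ℕ} {C : Finset (Finset ℕ)} (hC : C ∈ uPart a b) :
    ((oPart a b).filter (fun v => Finset.univ.image v = C)).card = b.factorial := by
  obtain ⟨hcard, hne, hdisj, hsup⟩ := mem_uPart.mp hC
  have hbij : ((oPart a b).filter (fun v => Finset.univ.image v = C)).card
      = (Finset.univ : Finset (Fin b ↪ {x // x ∈ C})).card := by
    refine Finset.card_bij' (i := fun v hv => ⟨fun j => ⟨v j, ?_⟩, ?_⟩)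
      (j := fun e _ => fun j => (e j).1) ?_ ?_ ?_ ?_
    · have := (Finset.mem_filter.mp hv).2
      rw [← this]; exact Finset.mem_image_of_mem v (mem_univ j)
    · intro j j' h
      exact oPart_inj (Finset.mem_filter.mp hv).1 (congrArg Subtype.val h)
    · intro v hv; exact mem_univ _
    · intro e _
      have hinjc : Function.Injective (fun j => ((e j : Finset ℕ))) := by
        intro j j' h
        exact e.injective (Subtype.ext h)
      have himg : Finset.univ.image (fun j => ((e j : Finset ℕ))) = C := by
        apply Finset.eq_of_subset_of_card_le
        · intro B hB
          obtain ⟨j, -, rfl⟩ := Finset.mem_image.mp hB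
          exact (e j).2
        · rw [Finset.card_image_of_injective _ hinjc, Finset.card_univ, Fintype.card_fin, hcard]
      rw [Finset.mem_filter]
      constructor
      · rw [mem_oPart]
        refine ⟨fun j h => hne (h ▸ (e j).2), fun j j' h => hdisj _ (e j).2 _ (e j').2
          (fun hh => h (e.injective (Subtype.ext hh))), ?_⟩
        have h5 := congrArg (fun S => Finset.sup S id) himg
        simp only [Finset.sup_image] at h5
        have : univ.sup (fun j => ((e j : Finset ℕ))) = Finset.Icc 1 a := by
          rw [← hsup, ← h5]; rfl
        exact this
      · exact himg
    · intro v hv; rfl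
    · intro e he; ext j : 1; rfl
  rw [hbij, Finset.card_univ, Fintype.card_embedding_eq, Fintype.card_fin,
    Fintype.card_coe, hcard, Nat.descFactorial_self]

lemma oPart_card {a b : ℕ} : (oPart a b).card = b.factorial * (uPart a b).card := by
  rw [Finset.card_eq_sum_card_fiberwise (f := fun v => Finset.univ.image v)
    (t := uPart a b) (fun v hv => key_mem_uPart hv)]
  rw [Finset.sum_congr rfl (fun C hC => fiber_card hC), Finset.sum_const, smul_eq_mul, mul_comm]

/-- the block vector of a surjection -/
def blocks {a b : ℕ} (f : Fin a → Fin b) : Fin b → Finset ℕ :=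
  fun j => (Finset.univ.filter (fun i => f i = j)).image (fun i => i.1 + 1)

lemma mem_blocks {a b : ℕ} {f : Fin a → Fin b} {j : Fin b} {x : ℕ} :
    x ∈ blocks f j ↔ ∃ i : Fin a, f i = j ∧ x = i.1 + 1 := by
  simp only [blocks, Finset.mem_image, Finset.mem_filter, Finset.mem_univ, true_and]
  tauto

lemma blocks_mem {a b : ℕ} (f : {f : Fin a → Fin b // Function.Surjective f}) :
    blocks f.1 ∈ oPart a b := by
  rw [mem_oPart]
  refine ⟨?_, ?_, ?_⟩
  · intro j
    obtain ⟨i, hi⟩ := f.2 j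
    exact Finset.nonempty_iff_ne_empty.mp ⟨i.1 + 1, mem_blocks.mpr ⟨i, hi, rfl⟩⟩
  · intro j j' hne
    rw [Finset.disjoint_left]
    rintro x hx hx'
    obtain ⟨i, hi, rfl⟩ := mem_blocks.mp hx
    obtain ⟨i', hi', he⟩ := mem_blocks.mp hx'
    have : i' = i := Fin.ext (by omega)
    exact hne (by rw [← hi, ← hi', this])
  · apply Finset.Subset.antisymm
    · intro x hx
      rw [Finset.mem_sup] at hx
      obtain ⟨j, -, hj⟩ := hx
      obtain ⟨i, -, rfl⟩ := mem_blocks.mp hj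
      simp [Nat.succ_le_of_lt i.2]
    · intro x hx
      rw [Finset.mem_Icc] at hx
      rw [Finset.mem_sup]
      refine ⟨f.1 ⟨x - 1, by omega⟩, mem_univ _, mem_blocks.mpr ⟨⟨x - 1, by omega⟩, rfl, by simp; omega⟩⟩

lemma surj_oPart_card {a b : ℕ} : surjCount a b = (oPart a b).card := by
  rw [surjCount, ← Fintype.card_coe (oPart a b)]
  apply Fintype.card_of_bijective (f := fun f => (⟨blocks f.1, blocks_mem f⟩ : {v // v ∈ oPart a b}))
  constructor
  · intro f g h
    apply Subtype.ext; funext i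
    have : (i.1 + 1) ∈ blocks f.1 (f.1 i) := mem_blocks.mpr ⟨i, rfl, rfl⟩
    rw [show blocks f.1 = blocks g.1 from congrArg Subtype.val h] at this
    obtain ⟨i', hi', he⟩ := mem_blocks.mp this
    have : i' = i := Fin.ext (by omega)
    rw [← hi', this]
  · rintro ⟨v, hv⟩
    obtain ⟨h1, h2, h3⟩ := mem_oPart.mp hv
    have hex : ∀ i : Fin a, ∃ j, i.1 + 1 ∈ v j := by
      intro i
      have : i.1 + 1 ∈ Finset.Icc 1 a := by simp [Nat.succ_le_of_lt i.2]
      rw [← h3, Finset.mem_sup] at this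
      obtain ⟨j, -, hj⟩ := this
      exact ⟨j, hj⟩
    choose F hF using hex
    have huniq : ∀ (i : Fin a) (j : Fin b), i.1 + 1 ∈ v j → F i = j := by
      intro i j hj
      by_contra hne
      exact Finset.disjoint_left.mp (h2 _ _ hne) (hF i) hj
    have hFsurj : Function.Surjective F := by
      intro j
      obtain ⟨x, hx⟩ := Finset.nonempty_iff_ne_empty.mpr (h1 j)
      have hxI : x ∈ Finset.Icc 1 a := by
        rw [← h3]; exact (Finset.le_sup (f := v) (mem_univ j)) hx
      rw [Finset.mem_Icc] at hxI
      refine ⟨⟨x - 1, by omega⟩, huniq _ _ ?_⟩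
      simpa [Nat.sub_add_cancel hxI.1] using hx
    refine ⟨⟨F, hFsurj⟩, ?_⟩
    apply Subtype.ext
    funext j
    ext x
    rw [mem_blocks]
    constructor
    · rintro ⟨i, rfl, rfl⟩; exact hF i
    · intro hx
      have hxI : x ∈ Finset.Icc 1 a := by
        rw [← h3]; exact (Finset.le_sup (f := v) (mem_univ j)) hx
      rw [Finset.mem_Icc] at hxI
      refine ⟨⟨x - 1, by omega⟩, ?_, by simp; omega⟩
      apply huniq
      simpa [Nat.sub_add_cancel hxI.1] using hx

lemma surjCount_stirling (a b : ℕ) : surjCount a b = b.factorial * stirling2 a b := by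
  rw [surj_oPart_card, oPart_card, stirling2_eq_uPart]

section Red
variable {n k : ℕ} (P : Fin n → Finset ℕ)

lemma mem_dotAct {g : Fin n → Fin n} {q : Fin n} {x : ℕ} :
    x ∈ dotAct P g q ↔ ∃ p, g p = q ∧ x ∈ P p := by
  simp only [dotAct, Finset.mem_biUnion, Finset.mem_filter, Finset.mem_univ, true_and]

variable (hP : IsRvalid k P)
include hP

lemma elem_bound {p : Fin n} {x : ℕ} (hx : x ∈ P p) : 1 ≤ x ∧ x ≤ 2 ^ k := by
  have : x ∈ Finset.Icc 1 (2 ^ k) := by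
    rw [← hP.1.2]; exact (Finset.le_sup (f := P) (mem_univ p)) hx
  rw [Finset.mem_Icc] at this; exact this

lemma vMax_P : vMax P = 2 ^ k := by
  rw [vMax, hP.1.2]
  apply le_antisymm
  · exact Finset.sup_le (fun x hx => by simpa using (Finset.mem_Icc.mp hx).2)
  · exact Finset.le_sup (f := id) (Finset.mem_Icc.mpr ⟨Nat.one_le_two_pow, le_refl _⟩)

omit hP in
lemma sup_dotAct (g : Fin n → Fin n) :
    Finset.univ.sup (dotAct P g) = Finset.univ.sup P := by
  ext x
  simp only [Finset.mem_sup, Finset.mem_univ, true_and]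
  constructor
  · rintro ⟨q, hq⟩
    obtain ⟨p, -, hx⟩ := (mem_dotAct P).mp hq
    exact ⟨p, hx⟩
  · rintro ⟨p, hp⟩
    exact ⟨g p, (mem_dotAct P).mpr ⟨p, rfl, hp⟩⟩

lemma vMax_dotAct (g : Fin n → Fin n) : vMax (dotAct P g) = 2 ^ k := by
  rw [vMax, sup_dotAct P g, ← vMax]
  exact vMax_P P hP

omit hP in
lemma nne_Qf (g : Fin n → Fin n) :
    nne (vUnion P (vUp (dotAct P g))) =
      ((Finset.univ.filter (fun p => P p ≠ ∅)) ∪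
        (Finset.univ.filter (fun p => P p ≠ ∅)).image g).card := by
  rw [nne]
  congr 1
  ext q
  simp only [Finset.mem_filter, Finset.mem_univ, true_and, Finset.mem_union, Finset.mem_image]
  simp only [vUnion, vUp]
  rw [Ne, Finset.union_eq_empty, Finset.image_eq_empty]
  have hA : dotAct P g q = ∅ ↔ ∀ p, g p = q → P p = ∅ := by
    constructor
    · intro h p hp
      by_contra hne
      obtain ⟨x, hx⟩ := Finset.nonempty_iff_ne_empty.mpr hne
      have : x ∈ dotAct P g q := (mem_dotAct P).mpr ⟨p, hp, hx⟩
      simp [h] at this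
    · intro h
      rw [← Finset.not_nonempty_iff_eq_empty]
      rintro ⟨x, hx⟩
      obtain ⟨p, hp, hx⟩ := (mem_dotAct P).mp hx
      simp [h p hp] at hx
  rw [hA]
  push_neg
  constructor
  · rintro h
    rcases Finset.eq_empty_or_nonempty (P q) with he | hne
    · obtain ⟨p, hp1, hp2⟩ := h he
      exact Or.inr ⟨p, hp2, hp1⟩
    · exact Or.inl hne
  · rintro (h | ⟨p, hpe, hp⟩) he
    · exact absurd he (Finset.nonempty_iff_ne_empty.mp h)
    · exact ⟨p, hp, hpe⟩

lemma Qf_eq_iff {g g' : Fin n → Fin n} :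
    vUnion P (vUp (dotAct P g)) = vUnion P (vUp (dotAct P g')) ↔
      ∀ p, P p ≠ ∅ → g p = g' p := by
  constructor
  · intro h p hp
    have hd : dotAct P g (g p) = dotAct P g' (g p) := by
      have hq := congrFun h (g p)
      simp only [vUnion, vUp, vMax_dotAct P hP] at hq
      ext x
      constructor <;> intro hx
      · obtain ⟨p1, -, hxp1⟩ := (mem_dotAct P).mp hx
        have hb := elem_bound P hP hxp1
        have hmem : x + 2 ^ k ∈ P (g p) ∪ (dotAct P g' (g p)).image (· + 2 ^ k) := by
          rw [← hq]
          exact Finset.mem_union_right _ (Finset.mem_image_of_mem _ hx)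
        rcases Finset.mem_union.mp hmem with h1 | h1
        · have := (elem_bound P hP h1).2
          omega
        · obtain ⟨y, hy, he⟩ := Finset.mem_image.mp h1
          have : y = x := by omega
          rwa [← this]
      · obtain ⟨p1, -, hxp1⟩ := (mem_dotAct P).mp hx
        have hb := elem_bound P hP hxp1
        have hmem : x + 2 ^ k ∈ P (g p) ∪ (dotAct P g (g p)).image (· + 2 ^ k) := by
          rw [hq]
          exact Finset.mem_union_right _ (Finset.mem_image_of_mem _ hx)
        rcases Finset.mem_union.mp hmem with h1 | h1
        · have := (elem_bound P hP h1).2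
          omega
        · obtain ⟨y, hy, he⟩ := Finset.mem_image.mp h1
          have : y = x := by omega
          rwa [← this]
    obtain ⟨x, hx⟩ := Finset.nonempty_iff_ne_empty.mpr hp
    have : x ∈ dotAct P g' (g p) := by
      rw [← hd]; exact (mem_dotAct P).mpr ⟨p, rfl, hx⟩
    obtain ⟨p', hp', hxp'⟩ := (mem_dotAct P).mp this
    rcases eq_or_ne p' p with rfl | hne
    · exact hp'.symm
    · exact absurd hxp' (Finset.disjoint_left.mp (hP.1.1 p' p hne) · hx)
  · intro h
    have : dotAct P g = dotAct P g' := by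
      funext q
      ext x
      rw [mem_dotAct P, mem_dotAct P]
      constructor <;> rintro ⟨p, hgp, hx⟩
      · exact ⟨p, by rw [← h p (fun he => by simp [he] at hx)]; exact hgp, hx⟩
      · exact ⟨p, by rw [h p (fun he => by simp [he] at hx)]; exact hgp, hx⟩
    rw [this]
end Red

lemma surjCount_eq_filter (a b : ℕ) :
    surjCount a b = ((Finset.univ : Finset (Fin a → Fin b)).filter Function.Surjective).card := by
  rw [surjCount, Fintype.card_subtype]

lemma fiberDA {n : ℕ} (N A D : Finset (Fin n)) (p0 : Fin n) (hA : A ⊆ N) :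
    ((Finset.univ : Finset (Fin n → Fin n)).filter (fun g =>
        (∀ p, p ∉ N → g p = p0) ∧ (∀ p ∈ N \ A, g p ∈ N) ∧ (∀ p ∈ A, g p ∈ D) ∧
          A.image g = D)).card
      = surjCount A.card D.card * N.card ^ (N.card - A.card) := by
  classical
  set a := A.card
  set d := D.card
  set l := N.card
  set b := N.card - A.card with hb
  have hBA : (N \ A).card = b := by rw [Finset.card_sdiff_of_subset hA]
  have eA : Fin a ≃o {x // x ∈ A} := A.orderIsoOfFin rfl
  have eD : Fin d ≃o {x // x ∈ D} := D.orderIsoOfFin rfl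
  have eN : Fin l ≃o {x // x ∈ N} := N.orderIsoOfFin rfl
  have eB : Fin b ≃o {x // x ∈ N \ A} := (N \ A).orderIsoOfFin hBA
  have key : ((Finset.univ : Finset (Fin n → Fin n)).filter (fun g =>
        (∀ p, p ∉ N → g p = p0) ∧ (∀ p ∈ N \ A, g p ∈ N) ∧ (∀ p ∈ A, g p ∈ D) ∧
          A.image g = D)).card
      = ((Finset.univ : Finset ((Fin a → Fin d) × (Fin b → Fin l))).filter
          (fun fh => Function.Surjective fh.1)).card := by
    refine Finset.card_bij'
      (i := fun g hg => (fun i => eD.symm ⟨g (eA i),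
          (Finset.mem_filter.mp hg).2.2.2.1 _ (eA i).2⟩,
        fun i => eN.symm ⟨g (eB i),
          (Finset.mem_filter.mp hg).2.2.1 _ (eB i).2⟩))
      (j := fun fh _ => fun p =>
        if hp : p ∈ A then (eD (fh.1 (eA.symm ⟨p, hp⟩)) : {x // x ∈ D}).1
        else if hp2 : p ∈ N \ A then (eN (fh.2 (eB.symm ⟨p, hp2⟩)) : {x // x ∈ N}).1
        else p0)
      ?_ ?_ ?_ ?_
    · intro g hg
      obtain ⟨-, hcan, hmN, hmD, himg⟩ := Finset.mem_filter.mp hg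
      rw [Finset.mem_filter]
      refine ⟨Finset.mem_univ _, ?_⟩
      intro j
      have hj : ((eD j : {x // x ∈ D}) : Fin n) ∈ A.image g := by
        rw [himg]; exact (eD j).2
      obtain ⟨p, hp, hgp⟩ := Finset.mem_image.mp hj
      refine ⟨eA.symm ⟨p, hp⟩, ?_⟩
      show eD.symm ⟨g (eA (eA.symm ⟨p, hp⟩)), _⟩ = j
      have h1 : (eA (eA.symm ⟨p, hp⟩)) = ⟨p, hp⟩ := eA.apply_symm_apply _
      have h2 : (⟨g (eA (eA.symm ⟨p, hp⟩)), hmD _ (eA (eA.symm ⟨p, hp⟩)).2⟩ : {x // x ∈ D}) = eD j := by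
        apply Subtype.ext
        simp only [h1]
        exact hgp
      rw [h2, OrderIso.symm_apply_apply]
    · intro fh hfh
      have hsurj : Function.Surjective fh.1 := (Finset.mem_filter.mp hfh).2
      rw [Finset.mem_filter]
      refine ⟨Finset.mem_univ _, ?_, ?_, ?_, ?_⟩
      · intro p hp
        have hp1 : p ∉ A := fun h => hp (hA h)
        have hp2 : p ∉ N \ A := fun h => hp (Finset.mem_sdiff.mp h).1
        simp [hp1, hp2]
      · intro p hp
        have hp1 : p ∉ A := (Finset.mem_sdiff.mp hp).2
        simp only [dif_neg hp1, dif_pos hp]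
        exact (eN _).2
      · intro p hp
        simp only [dif_pos hp]
        exact (eD _).2
      · apply Finset.Subset.antisymm
        · intro x hx
          obtain ⟨p, hp, rfl⟩ := Finset.mem_image.mp hx
          simp only [dif_pos hp]
          exact (eD _).2
        · intro x hx
          obtain ⟨i, hi⟩ := hsurj (eD.symm ⟨x, hx⟩)
          refine Finset.mem_image.mpr ⟨eA i, (eA i).2, ?_⟩
          beta_reduce
          rw [dif_pos (eA i).2]
          have h1 : eA.symm ⟨(eA i : Fin n), (eA i).2⟩ = i := by
            rw [Subtype.coe_eta, OrderIso.symm_apply_apply]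
          rw [h1, hi, OrderIso.apply_symm_apply]
    · intro g hg
      obtain ⟨-, hcan, hmN, hmD, himg⟩ := Finset.mem_filter.mp hg
      funext p
      by_cases hp : p ∈ A
      · show (if hp' : p ∈ A then _ else _) = g p
        rw [dif_pos hp]
        show ((eD (eD.symm ⟨g (eA (eA.symm ⟨p, hp⟩)), _⟩) : {x // x ∈ D}) : Fin n) = g p
        rw [OrderIso.apply_symm_apply]
        have h1 : (eA (eA.symm ⟨p, hp⟩)) = ⟨p, hp⟩ := eA.apply_symm_apply _
        rw [h1]
      · by_cases hp2 : p ∈ N \ A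
        · show (if hp' : p ∈ A then _ else _) = g p
          rw [dif_neg hp, dif_pos hp2]
          show ((eN (eN.symm ⟨g (eB (eB.symm ⟨p, hp2⟩)), _⟩) : {x // x ∈ N}) : Fin n) = g p
          rw [OrderIso.apply_symm_apply]
          have h1 : (eB (eB.symm ⟨p, hp2⟩)) = ⟨p, hp2⟩ := eB.apply_symm_apply _
          rw [h1]
        · show (if hp' : p ∈ A then _ else _) = g p
          rw [dif_neg hp, dif_neg hp2]
          have hpn : p ∉ N := by
            intro h
            exact hp2 (Finset.mem_sdiff.mpr ⟨h, hp⟩)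
          rw [hcan p hpn]
    · intro fh hfh
      refine Prod.ext ?_ ?_
      · funext i
        have hmem := (eA i).2
        have h0 : eA.symm ⟨(eA i : Fin n), (eA i).2⟩ = i := by
          rw [Subtype.coe_eta, OrderIso.symm_apply_apply]
        refine Eq.trans (congrArg (⇑eD.symm) (Subtype.ext ?_))
          (OrderIso.symm_apply_apply eD (fh.1 i))
        show (if hp : ((eA i : Fin n)) ∈ A then _ else _) = ((eD (fh.1 i) : {x // x ∈ D}) : Fin n)
        rw [dif_pos hmem, h0]
      · funext i
        have hmem := (eB i).2
        have hnotA : ((eB i : Fin n)) ∉ A := (Finset.mem_sdiff.mp hmem).2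
        have h0 : eB.symm ⟨(eB i : Fin n), (eB i).2⟩ = i := by
          rw [Subtype.coe_eta, OrderIso.symm_apply_apply]
        refine Eq.trans (congrArg (⇑eN.symm) (Subtype.ext ?_))
          (OrderIso.symm_apply_apply eN (fh.2 i))
        show (if hp : ((eB i : Fin n)) ∈ A then _ else _) = ((eN (fh.2 i) : {x // x ∈ N}) : Fin n)
        rw [dif_neg hnotA, dif_pos hmem, h0]
  rw [key]
  have h3 : ((Finset.univ : Finset ((Fin a → Fin d) × (Fin b → Fin l))).filter
      (fun fh => Function.Surjective fh.1)).card
      = (((Finset.univ : Finset (Fin a → Fin d)).filter Function.Surjective) ×ˢ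
          (Finset.univ : Finset (Fin b → Fin l))).card := by
    congr 1
    ext fh
    simp [Finset.mem_product]
  rw [h3, Finset.card_product, ← surjCount_eq_filter, Finset.card_univ, Fintype.card_fun,
    Fintype.card_fin, Fintype.card_fin]

lemma surjCount_zero {a b : ℕ} (h : a < b) : surjCount a b = 0 := by
  rw [surjCount, Fintype.card_eq_zero_iff]
  refine ⟨fun ⟨f, hf⟩ => ?_⟩
  have := Fintype.card_le_of_surjective f hf
  simp only [Fintype.card_fin] at this
  omega

lemma fiber_eq {n : ℕ} (N A D : Finset (Fin n)) (p0 : Fin n) (hD : Disjoint D N) (hA : A ⊆ N) :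
    ((Finset.univ : Finset (Fin n → Fin n)).filter (fun g =>
        (∀ p, p ∉ N → g p = p0) ∧ N.image g \ N = D)).filter
          (fun g => N.filter (fun p => g p ∈ D) = A)
      = (Finset.univ : Finset (Fin n → Fin n)).filter (fun g =>
        (∀ p, p ∉ N → g p = p0) ∧ (∀ p ∈ N \ A, g p ∈ N) ∧ (∀ p ∈ A, g p ∈ D) ∧
          A.image g = D) := by
  ext g
  simp only [Finset.mem_filter, Finset.mem_univ, true_and, and_assoc]
  constructor
  · rintro ⟨hcan, himg, hfil⟩
    have hmN : ∀ p ∈ N \ A, g p ∈ N := by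
      intro p hp
      obtain ⟨hpN, hpA⟩ := Finset.mem_sdiff.mp hp
      by_contra hgp
      have h1 : g p ∈ N.image g \ N :=
        Finset.mem_sdiff.mpr ⟨Finset.mem_image_of_mem g hpN, hgp⟩
      rw [himg] at h1
      exact hpA (hfil ▸ Finset.mem_filter.mpr ⟨hpN, h1⟩)
    refine ⟨hcan, hmN, ?_, ?_⟩
    · intro p hp
      have hp' : p ∈ N.filter (fun p => g p ∈ D) := by rw [hfil]; exact hp
      exact (Finset.mem_filter.mp hp').2
    · apply Finset.Subset.antisymm
      · intro x hx
        obtain ⟨p, hp, rfl⟩ := Finset.mem_image.mp hx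
        have hp' : p ∈ N.filter (fun p => g p ∈ D) := by rw [hfil]; exact hp
        exact (Finset.mem_filter.mp hp').2
      · intro x hx
        rw [← himg] at hx
        obtain ⟨hx1, hx2⟩ := Finset.mem_sdiff.mp hx
        obtain ⟨p, hp, rfl⟩ := Finset.mem_image.mp hx1
        refine Finset.mem_image.mpr ⟨p, ?_, rfl⟩
        by_contra hpA
        exact hx2 (hmN p (Finset.mem_sdiff.mpr ⟨hp, hpA⟩))
  · rintro ⟨hcan, hmN, hmD, himgA⟩
    have hfil : N.filter (fun p => g p ∈ D) = A := by
      ext p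
      simp only [Finset.mem_filter]
      constructor
      · rintro ⟨hpN, hpD⟩
        by_contra hpA
        exact (Finset.disjoint_left.mp hD hpD) (hmN p (Finset.mem_sdiff.mpr ⟨hpN, hpA⟩))
      · intro hp
        exact ⟨hA hp, hmD p hp⟩
    refine ⟨hcan, ?_, hfil⟩
    apply Finset.Subset.antisymm
    · intro x hx
      obtain ⟨hx1, hx2⟩ := Finset.mem_sdiff.mp hx
      obtain ⟨p, hp, rfl⟩ := Finset.mem_image.mp hx1
      by_cases hpA : p ∈ A
      · rw [← himgA]
        exact Finset.mem_image_of_mem g hpA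
      · exact absurd (hmN p (Finset.mem_sdiff.mpr ⟨hp, hpA⟩)) hx2
    · intro x hx
      refine Finset.mem_sdiff.mpr ⟨?_, Finset.disjoint_left.mp hD hx⟩
      rw [← himgA] at hx
      exact Finset.image_subset_image hA hx

lemma card_GD {n ℓ δ : ℕ} (N D : Finset (Fin n)) (p0 : Fin n) (hD : Disjoint D N)
    (hN : N.card = ℓ) (hDc : D.card = δ) :
    ((Finset.univ : Finset (Fin n → Fin n)).filter (fun g =>
        (∀ p, p ∉ N → g p = p0) ∧ N.image g \ N = D)).card
      = ∑ α ∈ Finset.Icc δ ℓ, Nat.choose ℓ α * (surjCount α δ * ℓ ^ (ℓ - α)) := by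
  rw [Finset.card_eq_sum_card_fiberwise (f := fun g => N.filter (fun p => g p ∈ D))
    (t := N.powerset) (fun g _ => Finset.mem_powerset.mpr (Finset.filter_subset _ _))]
  have step : ∀ A ∈ N.powerset,
      (((Finset.univ : Finset (Fin n → Fin n)).filter (fun g =>
        (∀ p, p ∉ N → g p = p0) ∧ N.image g \ N = D)).filter
          (fun g => N.filter (fun p => g p ∈ D) = A)).card
      = surjCount A.card δ * ℓ ^ (ℓ - A.card) := by
    intro A hAp
    have hA := Finset.mem_powerset.mp hAp
    rw [fiber_eq N A D p0 hD hA, fiberDA N A D p0 hA, hDc, hN]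
  rw [Finset.sum_congr rfl step, Finset.sum_powerset]
  have step2 : ∀ j ∈ Finset.range (N.card + 1),
      (∑ A ∈ Finset.powersetCard j N, surjCount A.card δ * ℓ ^ (ℓ - A.card))
        = Nat.choose ℓ j * (surjCount j δ * ℓ ^ (ℓ - j)) := by
    intro j hj
    rw [Finset.sum_congr rfl (fun A hA => by
      rw [(Finset.mem_powersetCard.mp hA).2]), Finset.sum_const,
      Finset.card_powersetCard, hN, smul_eq_mul]
  rw [Finset.sum_congr rfl step2]
  symm
  apply Finset.sum_subset
  · intro x hx
    rw [Finset.mem_Icc] at hx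
    rw [Finset.mem_range, hN]
    omega
  · intro x hx1 hx2
    rw [Finset.mem_range, hN] at hx1
    rw [Finset.mem_Icc] at hx2
    have : x < δ := by omega
    rw [surjCount_zero this]
    ring

lemma countMain {n ℓ δ : ℕ} (N : Finset (Fin n)) (p0 : Fin n) (hN : N.card = ℓ) :
    ((Finset.univ : Finset (Fin n → Fin n)).filter (fun g =>
        (∀ p, p ∉ N → g p = p0) ∧ (N.image g \ N).card = δ)).card
      = Nat.choose (n - ℓ) δ *
          ∑ α ∈ Finset.Icc δ ℓ, Nat.choose ℓ α * (surjCount α δ * ℓ ^ (ℓ - α)) := by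
  rw [Finset.card_eq_sum_card_fiberwise (f := fun g => N.image g \ N)
    (t := Finset.powersetCard δ (Finset.univ \ N)) (fun g hg => by
      rw [Finset.mem_coe, Finset.mem_powersetCard]
      refine ⟨fun x hx => Finset.mem_sdiff.mpr
        ⟨Finset.mem_univ x, (Finset.mem_sdiff.mp hx).2⟩, ?_⟩
      exact (Finset.mem_filter.mp hg).2.2)]
  have step : ∀ D ∈ Finset.powersetCard δ (Finset.univ \ N),
      (((Finset.univ : Finset (Fin n → Fin n)).filter (fun g =>
        (∀ p, p ∉ N → g p = p0) ∧ (N.image g \ N).card = δ)).filter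
          (fun g => N.image g \ N = D)).card
        = ∑ α ∈ Finset.Icc δ ℓ, Nat.choose ℓ α * (surjCount α δ * ℓ ^ (ℓ - α)) := by
    intro D hD
    obtain ⟨hDsub, hDc⟩ := Finset.mem_powersetCard.mp hD
    have hdisj : Disjoint D N := by
      rw [Finset.disjoint_left]
      intro x hx
      exact (Finset.mem_sdiff.mp (hDsub hx)).2
    rw [← card_GD N D p0 hdisj hN hDc]
    congr 1
    ext g
    simp only [Finset.mem_filter, Finset.mem_univ, true_and, and_assoc]
    constructor
    · rintro ⟨h1, -, h3⟩; exact ⟨h1, h3⟩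
    · rintro ⟨h1, h3⟩; exact ⟨h1, by rw [h3, hDc], h3⟩
  rw [Finset.sum_congr rfl step, Finset.sum_const, Finset.card_powersetCard,
    Finset.card_sdiff_of_subset (Finset.subset_univ N), Finset.card_univ, Fintype.card_fin, hN,
    smul_eq_mul]

end StmtSevenAux

theorem stmt7 (n k ℓ δ : ℕ) (hn : 1 ≤ n) (hℓ1 : 1 ≤ ℓ) (hℓn : ℓ ≤ n)
    (hδ : δ ≤ n - ℓ) (P : Fin n → Finset ℕ) (hP : IsRvalid k P) (hc : nne P = ℓ) :
    ((succSet P).filter (fun Q => nne Q = ℓ + δ)).card =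
      δ.factorial * Nat.choose (n - ℓ) δ *
        ∑ α ∈ Finset.Icc δ ℓ, Nat.choose ℓ α * ℓ ^ (ℓ - α) * stirling2 α δ := by
  classical
  set N : Finset (Fin n) := Finset.univ.filter (fun p => P p ≠ ∅) with hNdef
  have hNc : N.card = ℓ := hc
  set p0 : Fin n := ⟨0, hn⟩ with hp0
  set Qf : (Fin n → Fin n) → (Fin n → Finset ℕ) :=
    fun g => vUnion P (vUp (dotAct P g)) with hQf
  set c : (Fin n → Fin n) → (Fin n → Fin n) :=
    fun g p => if p ∈ N then g p else p0 with hcdef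
  have hQc : ∀ g, Qf (c g) = Qf g := by
    intro g
    apply (Qf_eq_iff P hP).mpr
    intro p hp
    have hpN : p ∈ N := Finset.mem_filter.mpr ⟨Finset.mem_univ p, hp⟩
    simp only [hcdef, if_pos hpN]
  have hcard : ∀ (S : Finset (Fin n)), (N ∪ S).card = N.card + (S \ N).card := by
    intro S
    rw [← Finset.union_sdiff_self_eq_union, Finset.card_union_of_disjoint Finset.disjoint_sdiff]
  have hsucc : succSet P = Finset.univ.image Qf := rfl
  rw [hsucc, Finset.filter_image]
  set T : Finset (Fin n → Fin n) :=
    Finset.univ.filter (fun g => nne (Qf g) = ℓ + δ) with hT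
  have himg : T.image Qf = (T.image c).image Qf := by
    rw [Finset.image_image]
    congr 1
    funext g
    exact (hQc g).symm
  rw [himg]
  have hinj : Set.InjOn Qf ↑(T.image c) := by
    intro g1 hg1 g2 hg2 he
    simp only [Finset.coe_image, Set.mem_image] at hg1 hg2
    obtain ⟨a1, -, rfl⟩ := hg1
    obtain ⟨a2, -, rfl⟩ := hg2
    have hag := (Qf_eq_iff P hP).mp he
    funext p
    by_cases hpN : p ∈ N
    · have hp : P p ≠ ∅ := (Finset.mem_filter.mp hpN).2
      have := hag p hp
      simpa only [hcdef, if_pos hpN] using this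
    · simp only [hcdef, if_neg hpN]
  rw [Finset.card_image_of_injOn hinj]
  have hTc : T.image c = Finset.univ.filter (fun g =>
      (∀ p, p ∉ N → g p = p0) ∧ (N.image g \ N).card = δ) := by
    ext g
    simp only [Finset.mem_image, Finset.mem_filter, Finset.mem_univ, true_and]
    constructor
    · rintro ⟨a, ha, rfl⟩
      rw [hT, Finset.mem_filter] at ha
      have hnne : nne (Qf (c a)) = ℓ + δ := by rw [hQc]; exact ha.2
      rw [nne_Qf, ← hNdef] at hnne
      have himgc : N.image (c a) = N.image a := by
        apply Finset.image_congr
        intro p hp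
        simp only [hcdef, if_pos (Finset.mem_coe.mp hp)]
      rw [himgc, hcard, hNc] at hnne
      refine ⟨fun p hp => by simp only [hcdef, if_neg hp], by rw [himgc]; omega⟩
    · rintro ⟨h1, h2⟩
      refine ⟨g, ?_, ?_⟩
      · rw [hT, Finset.mem_filter]
        refine ⟨Finset.mem_univ _, ?_⟩
        rw [nne_Qf, ← hNdef, hcard, hNc, h2]
      · funext p
        by_cases hpN : p ∈ N
        · simp only [hcdef, if_pos hpN]
        · simp only [hcdef, if_neg hpN]
          exact (h1 p hpN).symm
  rw [hTc, countMain N p0 hNc, Finset.mul_sum, Finset.mul_sum]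
  apply Finset.sum_congr rfl
  intro α hα
  rw [surjCount_stirling]
  ring
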